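/- Lemma (existence of a critical edge, the paper's conditions (3.20) in the proof of Claim 3.5). Let r be an order with levels on X, let (τ₀, ω₀) be a persistence pair of r, let ε > 0, and let ω̃ be an n-simplex with ω̃ ∈ OV(r, ω₀) but ω̃ ∉ SV_ε(r, τ₀, ω₀). Then there exists τ̃ ∈ X^(n−1) such that τ₀ ≺_r τ̃, r̂(τ₀) ≤ r̂(τ̃) < r̂(τ₀) + ε, ω̃ ∉ K_V(G(≻_r τ̃), ω₀), and ω̃ ∈ K_V(G(⪰_r τ̃), ω₀). -/

import Mathlib

open scoped Classical

namespace StableVol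

/-- A finite abstract simplicial complex of dimension `n`: a finite family of nonempty
finite subsets of the vertex set, closed under nonempty subsets, in which every element
is contained in an element of cardinality `n+1`. -/
structure NComplex (V : Type*) [DecidableEq V] (n : ℕ) where
  X : Finset (Finset V)
  nonempty_mem : ∀ σ ∈ X, σ.Nonempty
  down_closed : ∀ σ ∈ X, ∀ σ' : Finset V, σ' ⊆ σ → σ'.Nonempty → σ' ∈ X
  contained_top : ∀ σ ∈ X, ∃ ω ∈ X, σ ⊆ ω ∧ ω.card = n + 1

variable {V : Type*} [DecidableEq V] {n : ℕ}

/-- An `n`-cell is either an `n`-simplex (`some ω`) or the formal cell `ω∞` (`none`). -/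
abbrev Cell (V : Type*) := Option (Finset V)

/-- `τ` is a face of the cell `c`.  For `c = some ω` this means that `ω` is an
`n`-simplex of `X` containing `τ`; the faces of `ω∞ = none` are the `(n-1)`-simplices
having exactly one `n`-simplex coface. -/
def faceCell (C : NComplex V n) (τ : Finset V) : Cell V → Prop
  | some ω => ω ∈ C.X ∧ ω.card = n + 1 ∧ τ ⊆ ω
  | none => {ω | ω ∈ C.X ∧ ω.card = n + 1 ∧ τ ⊆ ω}.ncard = 1

def IsCell (C : NComplex V n) : Cell V → Prop
  | some ω => ω ∈ C.X ∧ ω.card = n + 1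
  | none => True

/-- Adjacency in the dual graph, restricted to the edge set `E ⊆ X^(n-1)`. -/
def adj (C : NComplex V n) (E : Set (Finset V)) (c c' : Cell V) : Prop :=
  ∃ τ ∈ E, faceCell C τ c ∧ faceCell C τ c' ∧ c ≠ c'

/-- `KV C E c₀`: the set of `n`-cells in the connected component of `c₀` in the
subgraph of the dual graph with edge set `E`. -/
def KV (C : NComplex V n) (E : Set (Finset V)) (c₀ : Cell V) : Set (Cell V) :=
  {c | Relation.ReflTransGen (adj C E) c₀ c}

/-- Every `(n-1)`-simplex of `X` is a face of exactly two `n`-cells. -/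
def TwoCofaces (C : NComplex V n) : Prop :=
  ∀ τ ∈ C.X, τ.card = n →
    ∃ c₁ c₂ : Cell V, c₁ ≠ c₂ ∧ ∀ c : Cell V, faceCell C τ c ↔ (c = c₁ ∨ c = c₂)

/-- The dual graph (with full edge set `X^(n-1)`) is connected. -/
def DualConn (C : NComplex V n) : Prop :=
  ∀ c c' : Cell V, IsCell C c → IsCell C c' →
    c' ∈ KV C {τ | τ ∈ C.X ∧ τ.card = n} c

/-- A level function: monotone with respect to strict inclusion of simplices. -/
def IsLevelFun (C : NComplex V n) (lev : Finset V → ℝ) : Prop :=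
  ∀ σ ∈ C.X, ∀ σ' ∈ C.X, σ ⊂ σ' → lev σ ≤ lev σ'

/-- `(lev, slt)` is an order with levels on `X`: `lev` is a level function and `slt`
is (the strict form of) a linear order on `X` refining both `lev` and strict
inclusion. -/
def IsOWL (C : NComplex V n) (lev : Finset V → ℝ)
    (slt : Finset V → Finset V → Prop) : Prop :=
  IsLevelFun C lev ∧
  (∀ σ ∈ C.X, ¬ slt σ σ) ∧
  (∀ σ ∈ C.X, ∀ σ' ∈ C.X, ∀ σ'' ∈ C.X, slt σ σ' → slt σ' σ'' → slt σ σ'') ∧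
  (∀ σ ∈ C.X, ∀ σ' ∈ C.X, σ ≠ σ' → slt σ σ' ∨ slt σ' σ) ∧
  (∀ σ ∈ C.X, ∀ σ' ∈ C.X, slt σ σ' → lev σ ≤ lev σ') ∧
  (∀ σ ∈ C.X, ∀ σ' ∈ C.X, σ ⊂ σ' → slt σ σ')

/-- Extension of a strict order on simplices to `n`-cells, `ω∞ = none` being the
unique maximum. -/
def cslt (slt : Finset V → Finset V → Prop) : Cell V → Cell V → Prop
  | some σ, some σ' => slt σ σ'
  | some _, none => True
  | none, _ => False

/-- `m` is the maximum cell of the set `S` with respect to the order `slt`. -/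
def IsMaxCell (slt : Finset V → Finset V → Prop) (S : Set (Cell V)) (m : Cell V) :
    Prop :=
  m ∈ S ∧ ∀ c ∈ S, c ≠ m → cslt slt c m

/-- Edge set of `G(≻ σ₀)`: the `(n-1)`-simplices strictly above `σ₀`. -/
def Egt (C : NComplex V n) (slt : Finset V → Finset V → Prop) (σ₀ : Finset V) :
    Set (Finset V) :=
  {τ | τ ∈ C.X ∧ τ.card = n ∧ slt σ₀ τ}

/-- Edge set of `G(⪰ σ₀)`. -/
def Ege (C : NComplex V n) (slt : Finset V → Finset V → Prop) (σ₀ : Finset V) :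
    Set (Finset V) :=
  {τ | τ ∈ C.X ∧ τ.card = n ∧ (τ = σ₀ ∨ slt σ₀ τ)}

/-- Edge set of `G(lev ≥ s)`. -/
def Elev (C : NComplex V n) (lev : Finset V → ℝ) (s : ℝ) : Set (Finset V) :=
  {τ | τ ∈ C.X ∧ τ.card = n ∧ s ≤ lev τ}

/-- `(τ₀, ω₀)` is a persistence pair of the order `slt`: the two `n`-cells having
`τ₀` as a face lie in distinct connected components of `G(≻ τ₀)`, and `ω₀` is the
smaller of the two maximum cells of these two components. -/
def IsPersPair (C : NComplex V n) (slt : Finset V → Finset V → Prop)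
    (τ₀ ω₀ : Finset V) : Prop :=
  τ₀ ∈ C.X ∧ τ₀.card = n ∧ ω₀ ∈ C.X ∧ ω₀.card = n + 1 ∧
  ∃ c₁ c₂ : Cell V, c₁ ≠ c₂ ∧ faceCell C τ₀ c₁ ∧ faceCell C τ₀ c₂ ∧
    c₂ ∉ KV C (Egt C slt τ₀) c₁ ∧
    ∃ m₂ : Cell V,
      IsMaxCell slt (KV C (Egt C slt τ₀) c₁) (some ω₀) ∧
      IsMaxCell slt (KV C (Egt C slt τ₀) c₂) m₂ ∧
      cslt slt (some ω₀) m₂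

/-- The optimal volume `OV(q, ω₀) = K_V(G(≻_q τ_{q,ω₀}), ω₀)`. -/
def OV (C : NComplex V n) (slt : Finset V → Finset V → Prop) (ω₀ : Finset V) :
    Set (Cell V) :=
  {c | ∃ τ, IsPersPair C slt τ ω₀ ∧ c ∈ KV C (Egt C slt τ) (some ω₀)}

/-- The stable volume `SV_ε(r, τ₀, ω₀) = K_V(G(r̂ ≥ r̂(τ₀) + ε), ω₀)`. -/
def SV (C : NComplex V n) (lev : Finset V → ℝ) (τ₀ ω₀ : Finset V) (ε : ℝ) :
    Set (Cell V) :=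
  KV C (Elev C lev (lev τ₀ + ε)) (some ω₀)

/-- `(qlev, qslt) ∈ R_ε`: an order with levels uniformly `ε/2`-close to `rlev`
satisfying the `(r, ω₀)`-order condition. -/
def InR (C : NComplex V n) (rlev : Finset V → ℝ)
    (rslt : Finset V → Finset V → Prop) (ω₀ : Finset V) (ε : ℝ)
    (qlev : Finset V → ℝ) (qslt : Finset V → Finset V → Prop) : Prop :=
  IsOWL C qlev qslt ∧ (∀ σ ∈ C.X, |qlev σ - rlev σ| < ε / 2) ∧
  (∀ σ ∈ C.X, rslt σ ω₀ → qslt σ ω₀)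

/-- `F_{ε,n}`: the `n`-simplices with level at least `lev τ₀ + ε` that precede `ω₀`. -/
def Fcells (C : NComplex V n) (lev : Finset V → ℝ)
    (slt : Finset V → Finset V → Prop) (τ₀ ω₀ : Finset V) (ε : ℝ) :
    Set (Finset V) :=
  {σ | σ ∈ C.X ∧ σ.card = n + 1 ∧ lev τ₀ + ε ≤ lev σ ∧ slt σ ω₀}

/-- `F_{ε,n-1}`: the `(n-1)`-simplices with level at least `lev τ₀ + ε` that
precede `ω₀`. -/
def Fedges (C : NComplex V n) (lev : Finset V → ℝ)
    (slt : Finset V → Finset V → Prop) (τ₀ ω₀ : Finset V) (ε : ℝ) :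
    Set (Finset V) :=
  {σ | σ ∈ C.X ∧ σ.card = n ∧ lev τ₀ + ε ≤ lev σ ∧ slt σ ω₀}

/-- `τ*(∂z)`: the `ℤ/2ℤ`-sum of the coefficients of `z` over the `n`-simplex
cofaces of `τ`. -/
def bsum (C : NComplex V n) (τ : Finset V) (z : Finset V → ZMod 2) : ZMod 2 :=
  ∑ ω ∈ C.X.filter (fun ω => ω.card = n + 1 ∧ τ ⊆ ω), z ω

/-- A feasible chain `z = ω₀ + Σ_{ω ∈ F_{ε,n}} α_ω ω` with `τ*(∂z) = 0` for all
`τ ∈ F_{ε,n-1}`. -/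
def IsFeasible (C : NComplex V n) (lev : Finset V → ℝ)
    (slt : Finset V → Finset V → Prop) (τ₀ ω₀ : Finset V) (ε : ℝ)
    (z : Finset V → ZMod 2) : Prop :=
  z ω₀ = 1 ∧
  (∀ ω : Finset V, ω ≠ ω₀ → ω ∉ Fcells C lev slt τ₀ ω₀ ε → z ω = 0) ∧
  (∀ τ ∈ Fedges C lev slt τ₀ ω₀ ε, bsum C τ z = 0)

/-- `‖z‖₀`: the number of simplices of `X` with nonzero coefficient in `z`. -/
def norm0 (C : NComplex V n) (z : Finset V → ZMod 2) : ℕ :=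
  (C.X.filter fun ω => z ω ≠ 0).card

/-- The level function of the perturbed order `q(r, η, A)`. -/
noncomputable def pertLev (C : NComplex V n) (rlev : Finset V → ℝ) (η : ℝ)
    (A : Set (Finset V)) : Finset V → ℝ :=
  fun σ => if (σ ∈ C.X ∧ σ.card = n + 1) ∨ σ ∈ A then rlev σ + η else rlev σ - η

/-- The strict order of the perturbed order `q(r, η, A)`. -/
def pertSlt (C : NComplex V n) (rlev : Finset V → ℝ)
    (rslt : Finset V → Finset V → Prop) (η : ℝ) (A : Set (Finset V)) :
    Finset V → Finset V → Prop :=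
  fun σ σ' => pertLev C rlev η A σ < pertLev C rlev η A σ' ∨
    (pertLev C rlev η A σ = pertLev C rlev η A σ' ∧ rslt σ σ')

/-- The `(n-1)`-simplices that are edges of the connected component of `c₀` in the
subgraph with edge set `E`. -/
def compEdges (C : NComplex V n) (E : Set (Finset V)) (c₀ : Cell V) :
    Set (Finset V) :=
  {τ | τ ∈ E ∧ ∃ c, faceCell C τ c ∧ c ∈ KV C E c₀}

/-- `IsPath C E c c' vs es`: `vs` is the vertex list and `es` the edge list of a walk
from `c` to `c'` in the subgraph of the dual graph with edge set `E`. -/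
inductive IsPath (C : NComplex V n) (E : Set (Finset V)) :
    Cell V → Cell V → List (Cell V) → List (Finset V) → Prop
  | nil (c : Cell V) : IsPath C E c c [c] []
  | cons {c c' c'' : Cell V} {vs : List (Cell V)} {es : List (Finset V)}
      {τ : Finset V} : τ ∈ E → faceCell C τ c → faceCell C τ c' → c ≠ c' →
      IsPath C E c' c'' vs es → IsPath C E c c'' (c :: vs) (τ :: es)


/-! ### Auxiliary lemmas -/

lemma adj_mono (C : NComplex V n) {E E' : Set (Finset V)} (h : E ⊆ E') {a b : Cell V}
    (hab : adj C E a b) : adj C E' a b := by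
  obtain ⟨τ, h1, h2, h3, h4⟩ := hab
  exact ⟨τ, h h1, h2, h3, h4⟩

lemma KV_mono (C : NComplex V n) {E E' : Set (Finset V)} (h : E ⊆ E') (c : Cell V) :
    KV C E c ⊆ KV C E' c := fun _ hc' =>
  Relation.ReflTransGen.mono (fun _ _ hab => adj_mono C h hab) _ _ hc'

lemma KV_trans (C : NComplex V n) {E : Set (Finset V)} {c c' : Cell V}
    (h : c' ∈ KV C E c) : KV C E c' ⊆ KV C E c := fun _ hd =>
  Relation.ReflTransGen.trans h hd

lemma adj_symm (C : NComplex V n) {E : Set (Finset V)} {a b : Cell V}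
    (h : adj C E a b) : adj C E b a := by
  obtain ⟨τ, h1, h2, h3, h4⟩ := h
  exact ⟨τ, h1, h3, h2, h4.symm⟩

lemma KV_symm (C : NComplex V n) {E : Set (Finset V)} {c c' : Cell V}
    (h : c' ∈ KV C E c) : c ∈ KV C E c' :=
  (@Relation.ReflTransGen.stdSymm _ _ ⟨fun _ _ hab => adj_symm C hab⟩).symm _ _ h

lemma KV_mem_face (C : NComplex V n) {E : Set (Finset V)} {c c' : Cell V}
    (h : c' ∈ KV C E c) : c' = c ∨ ∃ τ ∈ E, faceCell C τ c' := by
  rcases Relation.ReflTransGen.cases_tail h with h' | ⟨b, _, hadj⟩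
  · exact Or.inl h'
  · obtain ⟨τ, h1, _, h3, _⟩ := hadj
    exact Or.inr ⟨τ, h1, h3⟩

lemma KV_finset (C : NComplex V n) {E : Set (Finset V)} {c c' : Cell V}
    (h : c' ∈ KV C E c) :
    ∃ S : Finset (Finset V), ↑S ⊆ E ∧ c' ∈ KV C ↑S c ∧ (c' ≠ c → S.Nonempty) := by
  induction h with
  | refl => exact ⟨∅, by simp, Relation.ReflTransGen.refl, fun h => absurd rfl h⟩
  | @tail b d hbd hadj ih =>
    obtain ⟨S, hSE, hSKV, _⟩ := ih
    obtain ⟨τ, hτE, hf1, hf2, hne⟩ := hadj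
    refine ⟨insert τ S, ?_, ?_, fun _ => ⟨τ, Finset.mem_insert_self _ _⟩⟩
    · intro x hx
      rcases Finset.mem_insert.1 (by exact_mod_cast hx) with h' | h'
      · exact h' ▸ hτE
      · exact hSE h'
    · refine Relation.ReflTransGen.tail
        (Relation.ReflTransGen.mono (fun a b hab => adj_mono C ?_ hab) _ _ hSKV)
        ⟨τ, by simp, hf1, hf2, hne⟩
      intro x hx
      simp only [Finset.coe_insert, Set.mem_insert_iff]
      exact Or.inr hx

/-- Existence of a minimum of a nonempty finset with respect to a relation that is
total and transitive on a superset `T`. -/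
lemma exists_min_rel {α : Type*} [DecidableEq α] (lt : α → α → Prop) (T : Set α)
    (htot : ∀ a ∈ T, ∀ b ∈ T, a ≠ b → lt a b ∨ lt b a)
    (htr : ∀ a ∈ T, ∀ b ∈ T, ∀ c ∈ T, lt a b → lt b c → lt a c) :
    ∀ S : Finset α, ↑S ⊆ T → S.Nonempty → ∃ m ∈ S, ∀ b ∈ S, b ≠ m → lt m b := by
  intro S
  induction S using Finset.induction_on with
  | empty => intro _ hne; exact absurd hne (by simp)
  | @insert a s ha ih =>
    intro hS _
    by_cases hs : s.Nonempty
    · have hsT : ↑s ⊆ T := fun x hx => hS (by simp [hx])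
      obtain ⟨m, hmS, hmin⟩ := ih hsT hs
      have haT : a ∈ T := hS (by simp)
      have hmT : m ∈ T := hsT hmS
      have hne' : a ≠ m := fun h => ha (h ▸ hmS)
      rcases htot a haT m hmT hne' with h | h
      · refine ⟨a, by simp, fun b hb hba => ?_⟩
        have hbs : b ∈ s := by
          rcases Finset.mem_insert.1 hb with h' | h'
          · exact absurd h' hba
          · exact h'
        by_cases hbm : b = m
        · rw [hbm]; exact h
        · exact htr a haT m hmT b (hsT hbs) h (hmin b hbs hbm)
      · refine ⟨m, by simp [hmS], fun b hb hbm => ?_⟩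
        rcases Finset.mem_insert.1 hb with h' | h'
        · rw [h']; exact h
        · exact hmin b h' hbm
    · refine ⟨a, by simp, fun b hb hba => ?_⟩
      rcases Finset.mem_insert.1 hb with h' | h'
      · exact absurd h' hba
      · exact absurd ⟨b, h'⟩ hs

/-- Two persistence pairs with the same `n`-simplex cannot have strictly ordered
`(n-1)`-simplices. -/
lemma pers_pair_asymm (C : NComplex V n) {rlev : Finset V → ℝ}
    {rslt : Finset V → Finset V → Prop} (hr : IsOWL C rlev rslt)
    {a b ω₀ : Finset V} (hab : rslt a b)
    (hpa : IsPersPair C rslt a ω₀) (hpb : IsPersPair C rslt b ω₀) : False := by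
  obtain ⟨_, hirr, htrans, htot, _, _⟩ := hr
  obtain ⟨haX, hacard, hω₀X, hω₀card, c₁, c₂, hc12, hfc1, hfc2, hcnc,
    mA, hmaxA1, hmaxA2, hltA⟩ := hpa
  obtain ⟨hbX, hbcard, _, _, d₁, d₂, hd12, hfd1, hfd2, hdnc, m₂, hmax1, hmax2, hlt⟩ := hpb
  have hEsub : Egt C rslt b ⊆ Egt C rslt a := by
    rintro τ' ⟨h1, h2, h3⟩
    exact ⟨h1, h2, htrans a haX b hbX τ' h1 hab h3⟩
  have hω₀c₁ : (some ω₀ : Cell V) ∈ KV C (Egt C rslt a) c₁ := hmaxA1.1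
  have hω₀d₁ : (some ω₀ : Cell V) ∈ KV C (Egt C rslt a) d₁ :=
    KV_mono C hEsub d₁ hmax1.1
  have hd₁c₁ : d₁ ∈ KV C (Egt C rslt a) c₁ :=
    KV_trans C hω₀c₁ (KV_symm C hω₀d₁)
  have hadj : adj C (Egt C rslt a) d₁ d₂ := ⟨b, ⟨hbX, hbcard, hab⟩, hfd1, hfd2, hd12⟩
  have hd₂c₁ : d₂ ∈ KV C (Egt C rslt a) c₁ :=
    KV_trans C hd₁c₁ (Relation.ReflTransGen.single hadj)
  have hm₂b : m₂ ∈ KV C (Egt C rslt b) d₂ := hmax2.1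
  have hm₂c₁ : m₂ ∈ KV C (Egt C rslt a) c₁ :=
    KV_trans C hd₂c₁ (KV_mono C hEsub d₂ hm₂b)
  have hne : m₂ ≠ some ω₀ := by
    intro h
    rw [h] at hlt
    exact hirr ω₀ hω₀X hlt
  have hlt2 : cslt rslt m₂ (some ω₀) := hmaxA1.2 m₂ hm₂c₁ hne
  match m₂, hlt, hlt2, hm₂b with
  | none, _, hlt2, _ => exact hlt2
  | some x, hlt, hlt2, hm₂b =>
    have hxX : x ∈ C.X := by
      rcases KV_mem_face C hm₂b with h' | ⟨τ, _, hface⟩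
      · rw [← h'] at hfd2
        exact hfd2.1
      · exact hface.1
    exact hirr ω₀ hω₀X (htrans ω₀ hω₀X x hxX ω₀ hω₀X hlt hlt2)

/-- Uniqueness of the `(n-1)`-simplex of a persistence pair with given `n`-simplex. -/
lemma pers_pair_unique (C : NComplex V n) {rlev : Finset V → ℝ}
    {rslt : Finset V → Finset V → Prop} (hr : IsOWL C rlev rslt)
    {a b ω₀ : Finset V}
    (hpa : IsPersPair C rslt a ω₀) (hpb : IsPersPair C rslt b ω₀) : a = b := by
  by_contra hne
  rcases hr.2.2.2.1 a hpa.1 b hpb.1 hne with h | h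
  · exact pers_pair_asymm C hr h hpa hpb
  · exact pers_pair_asymm C hr h hpb hpa

/-- existence of a critical edge, conditions (3.20) in the proof of
Claim 3.5. -/
theorem exists_critical_edge
    (hn : 2 ≤ n) (C : NComplex V n) (htwo : TwoCofaces C) (hconn : DualConn C)
    (rlev : Finset V → ℝ) (rslt : Finset V → Finset V → Prop)
    (hr : IsOWL C rlev rslt)
    (τ₀ ω₀ : Finset V) (hpair : IsPersPair C rslt τ₀ ω₀)
    (ε : ℝ) (hε : 0 < ε)
    (ωt : Finset V) (hωtX : ωt ∈ C.X) (hωtc : ωt.card = n + 1)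
    (hOV : (some ωt : Cell V) ∈ OV C rslt ω₀)
    (hSV : (some ωt : Cell V) ∉ SV C rlev τ₀ ω₀ ε) :
    ∃ τt : Finset V, τt ∈ C.X ∧ τt.card = n ∧ rslt τ₀ τt ∧
      rlev τ₀ ≤ rlev τt ∧ rlev τt < rlev τ₀ + ε ∧
      (some ωt : Cell V) ∉ KV C (Egt C rslt τt) (some ω₀) ∧
      (some ωt : Cell V) ∈ KV C (Ege C rslt τt) (some ω₀) := by
  obtain ⟨τ, hpairτ, hKV⟩ := hOV
  have hττ₀ : τ = τ₀ := pers_pair_unique C hr hpairτ hpair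
  rw [hττ₀] at hKV
  obtain ⟨hτ₀X, hτ₀card, hω₀X, hω₀card, _⟩ := hpair
  obtain ⟨hlev, hirr, htrans, htot, hlevmono, hsub⟩ := hr
  have hω₀SV : (some ω₀ : Cell V) ∈ SV C rlev τ₀ ω₀ ε := Relation.ReflTransGen.refl
  have hneq : (some ωt : Cell V) ≠ some ω₀ := fun h => hSV (h ▸ hω₀SV)
  have hEgesub : ∀ σ : Finset V, Egt C rslt σ ⊆ Ege C rslt σ := by
    rintro σ τ' ⟨h1, h2, h3⟩
    exact ⟨h1, h2, Or.inr h3⟩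
  -- the candidate set
  set P : Finset V → Prop := fun σ => σ.card = n ∧ (σ = τ₀ ∨ rslt τ₀ σ) ∧
    (some ωt : Cell V) ∈ KV C (Ege C rslt σ) (some ω₀) with hP
  set S : Finset (Finset V) := C.X.filter P with hSdef
  have hτ₀S : τ₀ ∈ S := by
    refine Finset.mem_filter.2 ⟨hτ₀X, hτ₀card, Or.inl rfl, ?_⟩
    exact KV_mono C (hEgesub τ₀) _ hKV
  -- take the maximum of S
  obtain ⟨τt, hτtS, hτtmax⟩ :=
    exists_min_rel (fun x y => rslt y x) (↑C.X : Set (Finset V))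
      (fun a ha b hb hne => (htot a ha b hb hne).symm)
      (fun a ha b hb c hc h1 h2 => htrans c hc b hb a ha h2 h1)
      S (fun x hx => (Finset.mem_filter.1 hx).1) ⟨τ₀, hτ₀S⟩
  obtain ⟨hτtX, hτtcard, hτtge, hτtKV⟩ := Finset.mem_filter.1 hτtS
  -- ωt is not in the strict component
  have hnot : (some ωt : Cell V) ∉ KV C (Egt C rslt τt) (some ω₀) := by
    intro hmem
    obtain ⟨Sf, hSfE, hSfKV, hSfne⟩ := KV_finset C hmem
    have hSfX : ↑Sf ⊆ (↑C.X : Set (Finset V)) := fun x hx => (hSfE hx).1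
    obtain ⟨σ', hσ'S, hσ'min⟩ :=
      exists_min_rel rslt (↑C.X : Set (Finset V)) htot
        (fun a ha b hb c hc h1 h2 => htrans a ha b hb c hc h1 h2)
        Sf hSfX (hSfne hneq)
    obtain ⟨hσ'X, hσ'card, hσ'gt⟩ : σ' ∈ Egt C rslt τt := hSfE hσ'S
    have hsub2 : (↑Sf : Set (Finset V)) ⊆ Ege C rslt σ' := by
      intro b hb
      obtain ⟨hbX, hbcard, _⟩ := hSfE hb
      by_cases hbσ : b = σ'
      · exact ⟨hbX, hbcard, Or.inl hbσ⟩
      · exact ⟨hbX, hbcard, Or.inr (hσ'min b hb hbσ)⟩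
    have hKVσ' : (some ωt : Cell V) ∈ KV C (Ege C rslt σ') (some ω₀) :=
      KV_mono C hsub2 _ hSfKV
    have hτ₀σ' : rslt τ₀ σ' := by
      rcases hτtge with h | h
      · rw [← h]; exact hσ'gt
      · exact htrans τ₀ hτ₀X τt hτtX σ' hσ'X h hσ'gt
    have hσ'mem : σ' ∈ S := Finset.mem_filter.2 ⟨hσ'X, hσ'card, Or.inr hτ₀σ', hKVσ'⟩
    have hσ'ne : σ' ≠ τt := by
      intro h
      rw [h] at hσ'gt
      exact hirr τt hτtX hσ'gt
    exact hirr τt hτtX (htrans τt hτtX σ' hσ'X τt hτtX hσ'gt (hτtmax σ' hσ'mem hσ'ne))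
  -- strictness
  have hτ₀lt : rslt τ₀ τt := by
    rcases hτtge with h | h
    · subst h
      exact absurd (KV_mono C (fun x hx => hx) _ hKV) hnot
    · exact h
  have hlevle : rlev τ₀ ≤ rlev τt := hlevmono τ₀ hτ₀X τt hτtX hτ₀lt
  have hlevlt : rlev τt < rlev τ₀ + ε := by
    by_contra hge
    push_neg at hge
    have hsub3 : Ege C rslt τt ⊆ Elev C rlev (rlev τ₀ + ε) := by
      rintro b ⟨hbX, hbcard, hb⟩
      refine ⟨hbX, hbcard, le_trans hge ?_⟩
      rcases hb with h | h
      · rw [h]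
      · exact hlevmono τt hτtX b hbX h
    exact hSV (KV_mono C hsub3 _ hτtKV)
  exact ⟨τt, hτtX, hτtcard, hτ₀lt, hlevle, hlevlt, hnot, hτtKV⟩

end StableVol
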